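/- Let A be a Wheeler NFA with Wheeler order < on its states, let u, v be states and α, β strings in Pref(L(A)) such that α labels a path from the start state s to u, β labels a path from s to v, and not both α and β label paths to both u and v. Then α ≺ β (co-lexicographically) if and only if u < v. -/

import Mathlib

variable {V : Type*} {A : Type*}

/-- `Reaches E s α v`: the string `α` labels a path in the labeled graph `E`
from the state `s` to the state `v`. -/
inductive Reaches (E : V → A → V → Prop) (s : V) : List A → V → Prop
  | nil : Reaches E s [] s
  | snoc {α : List A} {u w : V} {a : A} :
      Reaches E s α u → E u a w → Reaches E s (α ++ [a]) w

/-- Co-lexicographic (strict) order on strings: lexicographic order of reverses. -/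
def ColexLt [LinearOrder A] (α β : List A) : Prop :=
  List.Lex (· < ·) α.reverse β.reverse

/-- `r` is a strict total order. -/
def StrictTotal (r : V → V → Prop) : Prop :=
  (∀ x, ¬ r x x) ∧ (∀ x y z, r x y → r y z → r x z) ∧
  (∀ x y : V, x ≠ y → r x y ∨ r y x)

/-- `r` is a Wheeler order for the labeled graph `E`: a strict total order on states
such that in-degree-0 states precede all states with positive in-degree, edges with
strictly smaller labels point to strictly smaller states, and equally-labeled edges
from ordered sources point to weakly ordered targets. -/
def WheelerRel [LinearOrder A] (E : V → A → V → Prop) (r : V → V → Prop) : Prop :=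
  StrictTotal r ∧
  (∀ x w : V, (∀ u a, ¬ E u a x) → (∃ u a, E u a w) → r x w) ∧
  (∀ u₁ a₁ v₁ u₂ a₂ v₂, E u₁ a₁ v₁ → E u₂ a₂ v₂ → a₁ < a₂ → r v₁ v₂) ∧
  (∀ u₁ v₁ u₂ v₂ a, E u₁ a v₁ → E u₂ a v₂ → r u₁ u₂ → r v₁ v₂ ∨ v₁ = v₂)

/-- The language accepted by the automaton `(V, E, F, s)`. -/
def Lang (E : V → A → V → Prop) (F : Set V) (s : V) : Set (List A) :=
  {α | ∃ w ∈ F, Reaches E s α w}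

/-- `Pref(L(A))`: the set of prefixes of accepted strings. -/
def PrefL (E : V → A → V → Prop) (F : Set V) (s : V) : Set (List A) :=
  {α | ∃ β, α ++ β ∈ Lang E F s}

/-- `I_u`: the strings in `Pref(L(A))` labeling a path from `s` to `u`. -/
def Iset (E : V → A → V → Prop) (F : Set V) (s u : V) : Set (List A) :=
  {α | α ∈ PrefL E F s ∧ Reaches E s α u}

/-- `I_α`: the set of states reached from `s` by a path labeled `α`. -/
def Istr (E : V → A → V → Prop) (s : V) (α : List A) : Set V :=
  {w | Reaches E s α w}

lemma reaches_nil_inv {E : V → A → V → Prop} {s u : V} (h : Reaches E s [] u) : u = s := by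
  generalize hγ : ([] : List A) = γ at h
  cases h with
  | nil => rfl
  | snoc h1 h2 => exact absurd hγ.symm (by simp)

lemma reaches_snoc_inv {E : V → A → V → Prop} {s w : V} {α : List A} {a : A}
    (h : Reaches E s (α ++ [a]) w) : ∃ u, Reaches E s α u ∧ E u a w := by
  generalize hγ : α ++ [a] = γ at h
  cases h with
  | nil => simp at hγ
  | snoc h1 h2 =>
    obtain ⟨h3, h4⟩ := List.append_inj' hγ rfl
    subst h3
    simp only [List.cons.injEq, and_true] at h4
    exact ⟨_, h1, h4 ▸ h2⟩

lemma key_lemma [LinearOrder A] (E : V → A → V → Prop) (s : V) (r : V → V → Prop)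
    (hsrc : ∀ u a, ¬ E u a s) (hW : WheelerRel E r) :
    ∀ n (α β : List A) (u v : V), α.length + β.length ≤ n → ColexLt α β →
      Reaches E s α u → Reaches E s β v →
      ¬(Reaches E s α v ∧ Reaches E s β u) → r u v := by
  intro n
  induction n with
  | zero =>
    intro α β u v hlen hc _ _ _
    have hβ : β = [] := List.length_eq_zero_iff.mp (by omega)
    subst hβ
    exact absurd hc List.not_lex_nil
  | succ n ih =>
    intro α β u v hlen hc hαu hβv hnot
    rcases β.eq_nil_or_concat' with rfl | ⟨β', b, rfl⟩
    · exact absurd hc List.not_lex_nil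
    · obtain ⟨v', hv', hev⟩ := reaches_snoc_inv hβv
      rcases α.eq_nil_or_concat' with rfl | ⟨α', a, rfl⟩
      · have hu : u = s := reaches_nil_inv hαu
        subst hu
        exact hW.2.1 _ _ hsrc ⟨_, _, hev⟩
      · obtain ⟨u', hu', heu⟩ := reaches_snoc_inv hαu
        have huv : u ≠ v := by
          rintro rfl
          exact hnot ⟨hαu, hβv⟩
        have hc' : List.Lex (· < ·) (a :: α'.reverse) (b :: β'.reverse) := by
          simpa [ColexLt, List.reverse_append] using hc
        cases hc' with
        | rel hab => exact hW.2.2.1 _ _ _ _ _ _ heu hev hab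
        | cons htail =>
          have hr : r u' v' := by
            refine ih α' β' u' v' ?_ htail hu' hv' ?_
            · simp only [List.length_append, List.length_cons, List.length_nil] at hlen
              omega
            · rintro ⟨h1, h2⟩
              exact hnot ⟨Reaches.snoc h1 hev, Reaches.snoc h2 heu⟩
          rcases hW.2.2.2 _ _ _ _ _ heu hev hr with h | h
          · exact h
          · exact absurd h huv

/-- For a Wheeler NFA with Wheeler order `r`, states `u, v`, and strings
`α ∈ I_u`, `β ∈ I_v` with not both `α, β ∈ I_u ∩ I_v`:
`α ≺ β` co-lexicographically iff `u` precedes `v` in the Wheeler order. -/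
theorem stmt4 {V A : Type*} [LinearOrder A]
    (E : V → A → V → Prop) (F : Set V) (s : V) (r : V → V → Prop)
    (hsrc : ∀ u a, ¬ E u a s)
    (hsuniq : ∀ x : V, (∀ u a, ¬ E u a x) → x = s)
    (hreach : ∀ x : V, ∃ α, Reaches E s α x)
    (hW : WheelerRel E r)
    (u v : V) (α β : List A)
    (hα : α ∈ Iset E F s u) (hβ : β ∈ Iset E F s v)
    (hnot : ¬ ({α, β} : Set (List A)) ⊆ Iset E F s u ∩ Iset E F s v) :
    ColexLt α β ↔ r u v := by
  obtain ⟨hαP, hαu⟩ := hα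
  obtain ⟨hβP, hβv⟩ := hβ
  have hnot' : ¬(Reaches E s α v ∧ Reaches E s β u) := by
    rintro ⟨h1, h2⟩
    apply hnot
    rintro γ (rfl | rfl)
    · exact ⟨⟨hαP, hαu⟩, ⟨hαP, h1⟩⟩
    · exact ⟨⟨hβP, h2⟩, ⟨hβP, hβv⟩⟩
  constructor
  · intro hc
    exact key_lemma E s r hsrc hW _ α β u v le_rfl hc hαu hβv hnot'
  · intro hr
    have hne : α ≠ β := by
      rintro rfl
      exact hnot' ⟨hβv, hαu⟩
    rcases lt_trichotomy α.reverse β.reverse with h | h | h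
    · exact h
    · exact absurd (List.reverse_inj.mp h) hne
    · have hvu : r v u := key_lemma E s r hsrc hW _ β α v u le_rfl
        (h) hβv hαu (fun ⟨h1, h2⟩ => hnot' ⟨h2, h1⟩)
      exact absurd (hW.1.2.1 _ _ _ hr hvu) (hW.1.1 u)
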